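/- Let ℤ act on X₀ = ℂ² ∖ {0} (with its subspace topology from ℂ²) by k · v = 2^k v, and let g : X₀ → OnePoint ℂ be the map sending (z, w) to z/w when w ≠ 0 and to the point ∞ when w = 0 (so g identifies the Riemann sphere OnePoint ℂ with the complex projective line ℙ¹(ℂ)). Then g is continuous and invariant under the ℤ-action, hence descends to a continuous surjective map f from the orbit space X₀/ℤ (with the quotient topology) onto OnePoint ℂ; moreover every fiber f⁻¹(p), p ∈ OnePoint ℂ, with its subspace topology, is homeomorphic to the torus S¹ × S¹. -/

import Mathlib

open OnePoint

noncomputable section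

/-- `ℂ²` with the Euclidean norm. -/
abbrev E : Type := EuclideanSpace ℂ (Fin 2)

/-- `X₀ = ℂ² ∖ {0}` with the subspace topology. -/
abbrev X₀ : Type := {v : E // v ≠ 0}

/-- The orbit relation of the `ℤ`-action `k • v = 2^k v` on `X₀`. -/
def orbitRel₂ (v w : X₀) : Prop := ∃ k : ℤ, ((2 : ℝ) ^ k) • (v : E) = (w : E)

/-- The map `X₀ → OnePoint ℂ = ℙ¹(ℂ)` sending `(z, w)` to `z / w` when `w ≠ 0` and to `∞`
when `w = 0`. -/
def g (v : X₀) : OnePoint ℂ :=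
  if (v : E) 1 = 0 then ∞ else (((v : E) 0 / (v : E) 1 : ℂ) : OnePoint ℂ)

/-! ### Auxiliary material -/

def uvec (p : OnePoint ℂ) : E :=
  OnePoint.rec ((WithLp.equiv 2 (Fin 2 → ℂ)).symm ![1, 0])
    (fun c => (WithLp.equiv 2 (Fin 2 → ℂ)).symm ![c, 1]) p

@[simp] lemma uvec_infty_0 : uvec ∞ 0 = 1 := rfl
@[simp] lemma uvec_infty_1 : uvec ∞ 1 = 0 := rfl
@[simp] lemma uvec_coe_0 (c : ℂ) : uvec (c : OnePoint ℂ) 0 = c := rfl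
@[simp] lemma uvec_coe_1 (c : ℂ) : uvec (c : OnePoint ℂ) 1 = 1 := rfl
@[simp] lemma csmul_apply (c : ℂ) (w : E) (i : Fin 2) : (c • w) i = c * w i := rfl

lemma uvec_ne (p : OnePoint ℂ) : uvec p ≠ 0 := by
  induction p using OnePoint.rec with
  | infty => intro h; have := congrArg (fun x : E => x 0) h; simp at this
  | coe c => intro h; have := congrArg (fun x : E => x 1) h; simp at this

lemma rsmul_apply (r : ℝ) (w : E) (i : Fin 2) : (r • w) i = (r : ℂ) * w i := by
  show r • (w i) = _; rw [Complex.real_smul]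

lemma orbit_equiv : Equivalence orbitRel₂ := by
  constructor
  · exact fun v => ⟨0, by simp⟩
  · rintro v w ⟨k, hk⟩
    exact ⟨-k, by rw [← hk, smul_smul, ← zpow_add₀ (two_ne_zero), neg_add_cancel, zpow_zero,
      one_smul]⟩
  · rintro u v w ⟨k, hk⟩ ⟨l, hl⟩
    exact ⟨l + k, by rw [← hl, ← hk, smul_smul, ← zpow_add₀ (two_ne_zero)]⟩

lemma g_csmul {c : ℂ} (hc : c ≠ 0) (v : X₀) (h : (c • (v : E)) ≠ 0) :
    g ⟨c • (v : E), h⟩ = g v := by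
  unfold g
  simp only [csmul_apply]
  by_cases h1 : (v : E) 1 = 0
  · simp [h1]
  · simp only [h1, mul_ne_zero hc h1, if_false, ↓reduceIte]
    rw [mul_div_mul_left _ _ hc]

lemma g_inv (v w : X₀) (h : orbitRel₂ v w) : g v = g w := by
  obtain ⟨k, hk⟩ := h
  have hr : ((2:ℝ) ^ k : ℝ) ≠ 0 := zpow_ne_zero _ two_ne_zero
  have hrc : (((2:ℝ) ^ k : ℝ) : ℂ) ≠ 0 := Complex.ofReal_ne_zero.2 hr
  have h0 : (w : E) 0 = (((2:ℝ)^k : ℝ) : ℂ) * (v : E) 0 := by rw [← hk, rsmul_apply]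
  have h1 : (w : E) 1 = (((2:ℝ)^k : ℝ) : ℂ) * (v : E) 1 := by rw [← hk, rsmul_apply]
  unfold g
  by_cases hv : (v : E) 1 = 0
  · simp [hv, h1]
  · rw [if_neg hv, if_neg (by rw [h1]; exact mul_ne_zero hrc hv), h0, h1,
      mul_div_mul_left _ _ hrc]

lemma g_uvec (p : OnePoint ℂ) : g ⟨uvec p, uvec_ne p⟩ = p := by
  induction p using OnePoint.rec with
  | infty => simp [g]
  | coe c => simp [g]

lemma fiber_char {v : X₀} {p : OnePoint ℂ} (h : g v = p) :
    ∃ c : ℂ, c ≠ 0 ∧ (v : E) = c • uvec p := by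
  by_cases h1 : (v : E) 1 = 0
  · have hp : p = ∞ := by rw [← h]; simp [g, h1]
    subst hp
    have h0 : (v : E) 0 ≠ 0 := by
      intro h0
      apply v.2
      ext i
      fin_cases i <;> simp [h0, h1]
    refine ⟨(v : E) 0, h0, ?_⟩
    ext i
    fin_cases i <;> simp [h1]
  · have hp : p = ((v : E) 0 / (v : E) 1 : ℂ) := by rw [← h]; simp [g, h1]
    subst hp
    refine ⟨(v : E) 1, h1, ?_⟩
    ext i
    fin_cases i <;> simp [mul_div_cancel₀ _ h1, mul_comm]

/-! ### Continuity of `g` -/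

lemma cont_coord (i : Fin 2) : Continuous fun v : X₀ => (v : E) i :=
  (EuclideanSpace.proj i).continuous.comp continuous_subtype_val

lemma g_cont : Continuous g := by
  rw [continuous_iff_continuousAt]
  intro v
  by_cases h1 : (v : E) 1 = 0
  · have h0 : (v : E) 0 ≠ 0 := by
      intro h0; exact v.2 (by ext i; fin_cases i <;> simpa)
    have hgv : g v = ∞ := by simp [g, h1]
    rw [ContinuousAt, hgv]
    rw [OnePoint.hasBasis_nhds_infty.tendsto_right_iff]
    rintro s ⟨-, hsk⟩
    obtain ⟨M, hM⟩ := hsk.isBounded.subset_closedBall 0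
    set M₀ : ℝ := max M 0 with hM₀
    have hMs : s ⊆ Metric.closedBall 0 M₀ :=
      hM.trans (Metric.closedBall_subset_closedBall (le_max_left _ _))
    have hopen : IsOpen {w : X₀ | (M₀ + 1) * ‖(w : E) 1‖ < ‖(w : E) 0‖} :=
      isOpen_lt (continuous_const.mul (cont_coord 1).norm) (cont_coord 0).norm
    have hvmem : v ∈ {w : X₀ | (M₀ + 1) * ‖(w : E) 1‖ < ‖(w : E) 0‖} := by
      simp [h1, norm_pos_iff, h0]
    filter_upwards [hopen.mem_nhds hvmem] with w hw
    by_cases hw1 : (w : E) 1 = 0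
    · right; simp [g, hw1]
    · left
      refine ⟨(w : E) 0 / (w : E) 1, ?_, by simp [g, hw1]⟩
      intro hmem
      have hb := Metric.mem_closedBall.1 (hMs hmem)
      rw [dist_zero_right, norm_div] at hb
      have hpos : (0:ℝ) < ‖(w : E) 1‖ := norm_pos_iff.2 hw1
      rw [div_le_iff₀ hpos] at hb
      have : (M₀ + 1) * ‖(w : E) 1‖ < M₀ * ‖(w : E) 1‖ := lt_of_lt_of_le hw hb
      nlinarith
  · have hopen : IsOpen {w : X₀ | (w : E) 1 ≠ 0} :=
      isOpen_compl_iff.mpr (isClosed_eq (cont_coord 1) continuous_const)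
    have heq : g =ᶠ[nhds v] fun w => (((w : E) 0 / (w : E) 1 : ℂ) : OnePoint ℂ) := by
      filter_upwards [hopen.mem_nhds h1] with w hw
      simp [g, hw]
    refine ContinuousAt.congr ?_ heq.symm
    exact OnePoint.continuous_coe.continuousAt.comp
      (((cont_coord 0).continuousAt).div ((cont_coord 1).continuousAt) h1)

/-! ### Hausdorffness of the quotient -/

lemma norm_ne (v : X₀) : ‖(v : E)‖ ≠ 0 := norm_ne_zero_iff.2 v.2

def H (v : X₀) : E × AddCircle (1 : ℝ) :=
  (‖(v : E)‖⁻¹ • (v : E), (Real.logb 2 ‖(v : E)‖ : ℝ))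

lemma H_cont : Continuous H := by
  have hn : Continuous fun v : X₀ => ‖(v : E)‖ := continuous_subtype_val.norm
  refine Continuous.prodMk ?_ ?_
  · exact (hn.inv₀ norm_ne).smul continuous_subtype_val
  · refine (AddCircle.continuous_mk' 1).comp ?_
    have hlog : Continuous fun v : X₀ => Real.log ‖(v : E)‖ :=
      continuous_iff_continuousAt.2 fun v =>
        ContinuousAt.comp (f := fun v : X₀ => ‖(v : E)‖)
          (Real.continuousAt_log (norm_ne v)) hn.continuousAt
    exact (hlog.div_const (Real.log 2) : Continuous fun v : X₀ => Real.logb 2 ‖(v : E)‖)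

lemma H_inv {v w : X₀} (h : orbitRel₂ v w) : H v = H w := by
  obtain ⟨k, hk⟩ := h
  have h2 : (0:ℝ) < (2:ℝ) ^ k := zpow_pos two_pos k
  have hnorm : ‖(w : E)‖ = (2:ℝ) ^ k * ‖(v : E)‖ := by
    rw [← hk, norm_smul, Real.norm_eq_abs, abs_of_pos h2]
  unfold H
  refine Prod.ext ?_ ?_
  · show ‖(v : E)‖⁻¹ • (v : E) = ‖(w : E)‖⁻¹ • (w : E)
    have hs : ((2:ℝ)^k*‖(v : E)‖)⁻¹ * (2:ℝ)^k = ‖(v : E)‖⁻¹ := by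
      rw [mul_inv, mul_comm ((2:ℝ)^k)⁻¹, mul_assoc, inv_mul_cancel₀ (ne_of_gt h2), mul_one]
    rw [hnorm, ← hk, smul_smul, hs]
  · show (Real.logb 2 ‖(v : E)‖ : AddCircle (1:ℝ)) = _
    have : Real.logb 2 ‖(w : E)‖ = Real.logb 2 ‖(v : E)‖ + k := by
      rw [hnorm, Real.logb_mul (ne_of_gt h2) (norm_ne v)]
      rw [← Real.rpow_intCast 2 k, Real.logb_rpow two_pos (by norm_num)]
      ring
    rw [this]
    symm
    rw [QuotientAddGroup.eq]
    exact ⟨-k, by simp [zsmul_eq_mul]⟩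

lemma H_sep {v w : X₀} (h : H v = H w) : orbitRel₂ v w := by
  have h1 := congrArg Prod.fst h
  have h2 := congrArg Prod.snd h
  simp only [H] at h1 h2
  rw [QuotientAddGroup.eq] at h2
  obtain ⟨k, hk⟩ := h2
  simp only [zsmul_eq_mul, mul_one] at hk
  have hvpos : (0:ℝ) < ‖(v : E)‖ := lt_of_le_of_ne (norm_nonneg _) (Ne.symm (norm_ne v))
  have hwpos : (0:ℝ) < ‖(w : E)‖ := lt_of_le_of_ne (norm_nonneg _) (Ne.symm (norm_ne w))
  have hlogb : Real.logb 2 ‖(w : E)‖ = Real.logb 2 ‖(v : E)‖ + k := by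
    linarith
  have hnorm : ‖(w : E)‖ = (2:ℝ) ^ (k : ℤ) * ‖(v : E)‖ := by
    have := Real.rpow_logb two_pos (by norm_num) hwpos
    rw [← this, hlogb, Real.rpow_add two_pos, Real.rpow_logb two_pos (by norm_num) hvpos,
      Real.rpow_intCast]
    ring
  refine ⟨k, ?_⟩
  have hw : (w : E) = ‖(w : E)‖ • ‖(w : E)‖⁻¹ • (w : E) := by
    rw [smul_smul, mul_inv_cancel₀ (norm_ne w), one_smul]
  have hs : (2:ℝ)^k*‖(v : E)‖*‖(v : E)‖⁻¹ = (2:ℝ)^k := by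
    rw [mul_assoc, mul_inv_cancel₀ (norm_ne v), mul_one]
  rw [hw, ← h1, hnorm, smul_smul, hs]

lemma quot_t2 : T2Space (Quot orbitRel₂) := by
  refine T2Space.of_injective_continuous (f := Quot.lift H (fun a b h => H_inv h)) ?_ ?_
  · intro a b
    induction a using Quot.ind with | _ v =>
    induction b using Quot.ind with | _ w =>
    intro h
    exact Quot.sound (H_sep h)
  · exact continuous_quot_lift _ H_cont

/-! ### The torus maps -/

def scal (a : Circle) (t : ℝ) : ℂ := (a : ℂ) * (((2:ℝ) ^ t : ℝ) : ℂ)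

lemma scal_ne (a : Circle) (t : ℝ) : scal a t ≠ 0 :=
  mul_ne_zero (Circle.coe_ne_zero a)
    (Complex.ofReal_ne_zero.2 (ne_of_gt (Real.rpow_pos_of_pos two_pos t)))

lemma abs_scal (a : Circle) (t : ℝ) : ‖scal a t‖ = (2:ℝ) ^ t := by
  rw [scal, norm_mul, Circle.norm_coe, Complex.norm_real, Real.norm_eq_abs, one_mul,
    abs_of_pos (Real.rpow_pos_of_pos two_pos t)]

def tvec (p : OnePoint ℂ) (c : ℂ) (hc : c ≠ 0) : X₀ :=
  ⟨c • uvec p, smul_ne_zero hc (uvec_ne p)⟩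

lemma g_tvec (p : OnePoint ℂ) (c : ℂ) (hc : c ≠ 0) : g (tvec p c hc) = p := by
  rw [tvec]
  have : (⟨uvec p, uvec_ne p⟩ : X₀) = ⟨uvec p, uvec_ne p⟩ := rfl
  rw [g_csmul hc ⟨uvec p, uvec_ne p⟩]
  exact g_uvec p

def tm (p : OnePoint ℂ) : Circle × ℝ → Quot orbitRel₂ :=
  fun x => Quot.mk _ (tvec p (scal x.1 x.2) (scal_ne _ _))

lemma tm_cont (p : OnePoint ℂ) : Continuous (tm p) := by
  have h2 : Continuous fun t : ℝ => (2:ℝ) ^ t := by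
    exact continuous_const.rpow continuous_id (fun _ => Or.inl two_ne_zero)
  have hscal : Continuous fun x : Circle × ℝ => scal x.1 x.2 := by
    exact (continuous_subtype_val.comp continuous_fst).mul
      (Complex.continuous_ofReal.comp (h2.comp continuous_snd))
  exact continuous_quot_mk.comp ((hscal.smul continuous_const).subtype_mk _)

def tmQ (p : OnePoint ℂ) : Circle × AddCircle (1:ℝ) → Quot orbitRel₂ :=
  fun x => Quotient.liftOn' x.2 (fun t => tm p (x.1, t)) (by
    intro s t hst
    rw [QuotientAddGroup.leftRel_apply] at hst
    obtain ⟨k, hk⟩ := hst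
    simp only [zsmul_eq_mul, mul_one] at hk
    have ht : t = s + k := by linarith
    subst ht
    apply Quot.sound
    refine ⟨k, ?_⟩
    show ((2:ℝ)^k : ℝ) • (scal x.1 s • uvec p) = scal x.1 (s + k) • uvec p
    rw [← smul_assoc]
    congr 1
    show ((2:ℝ)^(k:ℤ) : ℝ) • scal x.1 s = scal x.1 (s + k)
    rw [Complex.real_smul, scal, scal]
    rw [Real.rpow_add two_pos, ← Real.rpow_intCast 2 k]
    push_cast
    ring)

lemma tmQ_mk (p : OnePoint ℂ) (a : Circle) (t : ℝ) :
    tmQ p (a, (t : AddCircle (1:ℝ))) = tm p (a, t) := rfl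

lemma tmQ_cont (p : OnePoint ℂ) : Continuous (tmQ p) := by
  have hq := (IsOpenQuotientMap.id (X := Circle)).prodMap
    (QuotientAddGroup.isOpenQuotientMap_mk (N := AddSubgroup.zmultiples (1:ℝ)))
  exact hq.isQuotientMap.continuous_iff.mpr (tm_cont p)

lemma fbar_tmQ (p : OnePoint ℂ) (x : Circle × AddCircle (1:ℝ)) :
    Quot.lift g g_inv (tmQ p x) = p := by
  obtain ⟨a, q⟩ := x
  induction q using Quotient.inductionOn' with | _ t =>
  show Quot.lift g g_inv (tm p (a, t)) = p
  exact g_tvec p _ _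

theorem g_descends_to_torus_fibration :
    Continuous g ∧
    (∀ v w : X₀, orbitRel₂ v w → g v = g w) ∧
    ∃ f : Quot orbitRel₂ → OnePoint ℂ,
      Continuous f ∧ Function.Surjective f ∧
      (∀ v : X₀, f (Quot.mk orbitRel₂ v) = g v) ∧
      ∀ p : OnePoint ℂ, Nonempty ((f ⁻¹' {p}) ≃ₜ Circle × Circle) := by
  refine ⟨g_cont, g_inv, Quot.lift g g_inv, continuous_quot_lift _ g_cont, ?_, fun v => rfl, ?_⟩
  · intro p
    exact ⟨Quot.mk _ ⟨uvec p, uvec_ne p⟩, g_uvec p⟩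
  · intro p
    haveI : T2Space (Quot orbitRel₂) := quot_t2
    haveI : Fact ((0:ℝ) < 1) := ⟨one_pos⟩
    set f : Quot orbitRel₂ → OnePoint ℂ := Quot.lift g g_inv with hf
    -- the map into the fiber
    have hmem : ∀ x : Circle × AddCircle (1:ℝ), tmQ p x ∈ f ⁻¹' {p} := fun x => fbar_tmQ p x
    set F : Circle × AddCircle (1:ℝ) → (f ⁻¹' {p} : Set _) := fun x => ⟨tmQ p x, hmem x⟩ with hF
    have hFc : Continuous F := (tmQ_cont p).subtype_mk _
    -- bijectivity
    have hinj : Function.Injective F := by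
      rintro ⟨a, q⟩ ⟨b, r⟩ h
      induction q using Quotient.inductionOn' with | _ t =>
      induction r using Quotient.inductionOn' with | _ s =>
      have h' : tm p (a, t) = tm p (b, s) := congrArg Subtype.val h
      rw [tm, tm, Quot.eq] at h'
      obtain ⟨k, hk⟩ := (orbit_equiv.eqvGen_iff).mp h'
      have hk' : ((2:ℝ)^(k:ℤ) : ℝ) • (scal a t • uvec p) = scal b s • uvec p := hk
      rw [← smul_assoc] at hk'
      have hsc : ((2:ℝ)^(k:ℤ) : ℝ) • scal a t = scal b s :=
        smul_left_injective ℂ (uvec_ne p) hk'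
      rw [Complex.real_smul] at hsc
      -- compare absolute values
      have habs := congrArg (‖·‖) hsc
      rw [norm_mul, Complex.norm_real, Real.norm_eq_abs, abs_scal, abs_scal,
        abs_of_pos (zpow_pos two_pos k)] at habs
      have hzw : ((2:ℝ)^(k:ℤ) : ℝ) = (2:ℝ) ^ (k:ℝ) := (Real.rpow_intCast 2 k).symm
      rw [hzw, ← Real.rpow_add two_pos] at habs
      have hs : s = (k:ℝ) + t := by
        have := congrArg (Real.logb 2) habs
        rw [Real.logb_rpow two_pos (by norm_num), Real.logb_rpow two_pos (by norm_num)] at this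
        exact this.symm
      -- second coordinates agree
      have hq2 : ((t : ℝ) : AddCircle (1:ℝ)) = ((s : ℝ) : AddCircle (1:ℝ)) := by
        rw [QuotientAddGroup.eq]
        exact ⟨k, by simp [zsmul_eq_mul, hs]⟩
      -- first coordinates agree
      have hab : a = b := by
        have h2t : (((2:ℝ)^t : ℝ) : ℂ) ≠ 0 :=
          Complex.ofReal_ne_zero.2 (ne_of_gt (Real.rpow_pos_of_pos two_pos t))
        apply Subtype.ext
        have hthis : (((2:ℝ)^(k:ℝ) : ℝ) : ℂ) * ((a : ℂ) * (((2:ℝ)^t : ℝ) : ℂ))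
            = (b : ℂ) * (((2:ℝ)^s : ℝ) : ℂ) := by
          exact hzw ▸ hsc
        rw [hs, Real.rpow_add two_pos] at hthis
        push_cast at hthis
        have h2k : (((2:ℝ)^(k:ℝ) : ℝ) : ℂ) ≠ 0 :=
          Complex.ofReal_ne_zero.2 (ne_of_gt (Real.rpow_pos_of_pos two_pos _))
        field_simp at hthis
        have h2kc : (2:ℂ)^k ≠ 0 := zpow_ne_zero _ two_ne_zero
        have heq2 : (2:ℂ)^k * ((a : ℂ) * (((2:ℝ)^t : ℝ) : ℂ))
            = (2:ℂ)^k * ((b : ℂ) * (((2:ℝ)^t : ℝ) : ℂ)) := by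
          rw [hthis]
        exact mul_right_cancel₀ h2t (mul_left_cancel₀ h2kc heq2)
      exact Prod.ext hab hq2
    have hsurj : Function.Surjective F := by
      rintro ⟨q, hq⟩
      obtain ⟨v, hv⟩ := Quot.exists_rep q
      have hgv : g v = p := by
        have : f q = p := hq
        rw [← hv] at this
        exact this
      obtain ⟨c, hc, hvc⟩ := fiber_char hgv
      have hscal : scal (Circle.exp (Complex.arg c)) (Real.logb 2 ‖c‖) = c := by
        rw [scal, Circle.coe_exp,
          Real.rpow_logb two_pos (by norm_num) (norm_pos_iff.mpr hc), mul_comm]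
        exact Complex.norm_mul_exp_arg_mul_I c
      refine ⟨(Circle.exp (Complex.arg c), (Real.logb 2 ‖c‖ : ℝ)), ?_⟩
      apply Subtype.ext
      show tm p (Circle.exp (Complex.arg c), Real.logb 2 ‖c‖) = q
      rw [← hv]
      show Quot.mk orbitRel₂ (tvec p
        (scal (Circle.exp (Complex.arg c)) (Real.logb 2 ‖c‖)) (scal_ne _ _))
        = Quot.mk orbitRel₂ v
      exact congrArg _ (Subtype.ext (by
        show scal _ _ • uvec p = (v : E)
        rw [hscal, hvc]))
    -- assemble the homeomorphism
    set e : (Circle × AddCircle (1:ℝ)) ≃ (f ⁻¹' {p} : Set _) :=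
      Equiv.ofBijective F ⟨hinj, hsurj⟩ with he
    have hec : Continuous e := hFc
    exact ⟨(hec.homeoOfEquivCompactToT2 (f := e)).symm.trans
      ((Homeomorph.refl Circle).prodCongr (AddCircle.homeomorphCircle one_ne_zero))⟩
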